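/- Let L be closed under a binary connective ∧ and a unary connective ¬, and let C satisfy Weak Compactness, Inclusion, Cumulativity, ∧-R, ¬-R1 and ¬-R2. Then there is a restricted fC-model ⟨M, ⊨, f⟩ that behaves classically with respect to ∧ and ¬ (for every m ∈ M: m ⊨ a∧b iff m ⊨ a and m ⊨ b; m ⊨ ¬a iff m ⊭ a) such that C(A) = Th(f(Mod(A))) for every A ⊆ L. -/
import Mathlib


/-- `ModSet sat A` is the set of models satisfying every formula of `A`. -/
def ModSet {M L : Type*} (sat : M → L → Prop) (A : Set L) : Set M :=
  {m | ∀ a ∈ A, sat m a}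

/-- `ThSet sat X` is the set of formulas satisfied by every model of `X`. -/
def ThSet {M L : Type*} (sat : M → L → Prop) (X : Set M) : Set L :=
  {a | ∀ m ∈ X, sat m a}

/-- Representation with connectives: every operation satisfying Weak Compactness,
Inclusion, Cumulativity, ∧-R, ¬-R1 and ¬-R2 is defined by a restricted fC-model whose
satisfaction relation behaves classically with respect to `∧` and `¬`. -/
theorem stmt_15 {L : Type u} [Nonempty L] (conj : L → L → L) (neg : L → L)
    (C : Set L → Set L)
    (hWC : ∀ A : Set L, C A = Set.univ → ∃ B : Set L, B ⊆ A ∧ B.Finite ∧ C B = Set.univ)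
    (hIncl : ∀ A : Set L, A ⊆ C A)
    (hCum : ∀ A B : Set L, A ⊆ B → B ⊆ C A → C A = C B)
    (hconjR : ∀ (A : Set L) (a b : L), C (A ∪ {conj a b}) = C (A ∪ {a, b}))
    (hneg1 : ∀ (A : Set L) (a : L), C (A ∪ {a, neg a}) = Set.univ)
    (hneg2 : ∀ (A : Set L) (a : L), C (A ∪ {neg a}) = Set.univ → a ∈ C A) :
    ∃ (M : Type u) (sat : M → L → Prop) (f : Set M → Set M),
      (∀ X : Set M, f X ⊆ X) ∧
      (∀ X Y : Set M, f X ⊆ Y → Y ⊆ X → f Y = f X) ∧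
      (∀ X : Set M, f X = ∅ → X = ∅) ∧
      (∀ (m : M) (a b : L), sat m (conj a b) ↔ sat m a ∧ sat m b) ∧
      (∀ (m : M) (a : L), sat m (neg a) ↔ ¬ sat m a) ∧
      (∀ A : Set L, C A = ThSet sat (f (ModSet sat A))) := by
  classical
  -- upward monotonicity of inconsistency
  have hup : ∀ A B : Set L, A ⊆ B → C A = Set.univ → C B = Set.univ := by
    intro A B hAB hA
    have h := hCum A B hAB (by rw [hA]; exact Set.subset_univ _)
    rw [← h, hA]
  have hidem : ∀ A : Set L, C (C A) = C A :=
    fun A => (hCum A (C A) (hIncl A) subset_rfl).symm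
  -- maximal consistent sets
  set MC : Set L → Prop :=
    fun T => C T ≠ Set.univ ∧ ∀ B, T ⊆ B → C B ≠ Set.univ → B = T with hMCdef
  -- Lindenbaum
  have lind : ∀ A : Set L, C A ≠ Set.univ → ∃ T, MC T ∧ A ⊆ T := by
    intro A hA
    have hub : ∀ c ⊆ {B : Set L | C B ≠ Set.univ}, IsChain (· ⊆ ·) c → c.Nonempty →
        ∃ ub ∈ {B : Set L | C B ≠ Set.univ}, ∀ s ∈ c, s ⊆ ub := by
      intro c hcS hchain hcne
      refine ⟨⋃₀ c, ?_, fun s hs => Set.subset_sUnion_of_mem hs⟩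
      intro hU
      obtain ⟨B, hBsub, hBfin, hBincons⟩ := hWC _ hU
      have hdir : DirectedOn (fun i j : Set L => id i ⊆ id j) c := by
        intro x hx y hy
        rcases hchain.total hx hy with h | h
        · exact ⟨y, hy, h, subset_rfl⟩
        · exact ⟨x, hx, subset_rfl, h⟩
      have hBsub' : (hBfin.toFinset : Set L) ⊆ ⋃ i ∈ c, id i := by
        rw [hBfin.coe_toFinset]
        intro x hx
        obtain ⟨s, hs, hxs⟩ := hBsub hx
        exact Set.mem_biUnion hs hxs
      obtain ⟨s, hsc, hBs⟩ :=
        DirectedOn.exists_mem_subset_of_finset_subset_biUnion hcne hdir hBsub'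
      rw [hBfin.coe_toFinset] at hBs
      exact hcS hsc (hup B s hBs hBincons)
    obtain ⟨T, hAT, hTmax⟩ := zorn_subset_nonempty _ hub A hA
    exact ⟨T, ⟨hTmax.1, fun B hTB hB => (hTmax.2 hB hTB).antisymm hTB⟩, hAT⟩
  -- maximal consistent sets are closed
  have hMCclosed : ∀ T, MC T → C T = T := by
    intro T hT
    exact hT.2 (C T) (hIncl T) (by rw [hidem]; exact hT.1)
  -- negation: classical behaviour
  have hMCneg : ∀ T, MC T → ∀ a, (neg a ∈ T ↔ a ∉ T) := by
    intro T hT a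
    constructor
    · intro hna ha
      have : T ∪ {a, neg a} = T := by
        apply Set.union_eq_self_of_subset_right
        intro x hx
        rcases hx with h | h
        · exact h ▸ ha
        · exact (Set.mem_singleton_iff.mp h) ▸ hna
      exact hT.1 (this ▸ hneg1 T a)
    · intro ha
      by_cases hB : C (T ∪ {neg a}) = Set.univ
      · exact absurd ((hMCclosed T hT) ▸ hneg2 T a hB) ha
      · have := hT.2 (T ∪ {neg a}) Set.subset_union_left hB
        rw [← this]
        exact Set.mem_union_right _ rfl
  -- conjunction: classical behaviour
  have hMCconj : ∀ T, MC T → ∀ a b, (conj a b ∈ T ↔ a ∈ T ∧ b ∈ T) := by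
    intro T hT a b
    have hTc := hMCclosed T hT
    constructor
    · intro hab
      have h1 : T ∪ {conj a b} = T :=
        Set.union_eq_self_of_subset_right (Set.singleton_subset_iff.mpr hab)
      have h2 : C (T ∪ {a, b}) = T := by rw [← hconjR, h1, hTc]
      constructor
      · have : a ∈ T ∪ {a, b} := Set.mem_union_right _ (Or.inl rfl)
        exact h2 ▸ hIncl _ this
      · have : b ∈ T ∪ {a, b} := Set.mem_union_right _ (Or.inr rfl)
        exact h2 ▸ hIncl _ this
    · rintro ⟨ha, hb⟩
      have h1 : T ∪ {a, b} = T := by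
        apply Set.union_eq_self_of_subset_right
        intro x hx
        rcases hx with h | h
        · exact h ▸ ha
        · exact (Set.mem_singleton_iff.mp h) ▸ hb
      have h2 : C (T ∪ {conj a b}) = T := by rw [hconjR, h1, hTc]
      have : conj a b ∈ T ∪ {conj a b} := Set.mem_union_right _ rfl
      exact h2 ▸ hIncl _ this
  -- the model type
  refine ⟨{T : Set L // MC T}, fun m a => a ∈ m.val, ?_⟩
  set M := {T : Set L // MC T}
  set sat : M → L → Prop := fun m a => a ∈ m.val with hsatdef
  -- basic facts about ModSet / ThSet
  have hmodmem : ∀ (A : Set L) (m : M), m ∈ ModSet sat A ↔ A ⊆ m.val := by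
    intro A m; rfl
  have hthmem : ∀ (X : Set M) (a : L), a ∈ ThSet sat X ↔ ∀ m ∈ X, a ∈ m.val := by
    intro X a; rfl
  -- Th(Mod D) = D for closed consistent D
  have hthmod : ∀ D : Set L, C D = D → C D ≠ Set.univ →
      ThSet sat (ModSet sat D) = D := by
    intro D hDc hDcons
    apply Set.Subset.antisymm
    · intro a ha
      by_contra haD
      have hcons : C (D ∪ {neg a}) ≠ Set.univ := by
        intro h
        exact haD (hDc ▸ hneg2 D a h)
      obtain ⟨T, hTmc, hDT⟩ := lind _ hcons
      have hm : (⟨T, hTmc⟩ : M) ∈ ModSet sat D := by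
        rw [hmodmem]
        exact Set.subset_union_left.trans hDT
      have haT : a ∈ T := ha _ hm
      have hnaT : neg a ∈ T := hDT (Set.mem_union_right _ rfl)
      exact (hMCneg T hTmc a).mp hnaT haT
    · intro a ha m hm
      exact (hmodmem D m).mp hm ha
  -- C (Th (Mod A)) = C A
  have hthmodC : ∀ A : Set L, C (ThSet sat (ModSet sat A)) = C A := by
    intro A
    have hsub1 : A ⊆ ThSet sat (ModSet sat A) := by
      intro a ha m hm
      exact (hmodmem A m).mp hm ha
    by_cases hA : C A = Set.univ
    · rw [hA]; exact hup _ _ hsub1 hA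
    · have hsub2 : ThSet sat (ModSet sat A) ⊆ C A := by
        have hCA : ThSet sat (ModSet sat (C A)) = C A := hthmod (C A) (hidem A) (by rwa [hidem])
        rw [← hCA]
        intro a ha m hm
        apply ha
        rw [hmodmem] at hm ⊢
        exact (hIncl A).trans hm
      exact (hCum A _ hsub1 hsub2).symm
  -- consistent sets have models
  have hmodne : ∀ D : Set L, C D ≠ Set.univ → (ModSet sat D).Nonempty := by
    intro D hD
    obtain ⟨T, hTmc, hDT⟩ := lind D hD
    exact ⟨⟨T, hTmc⟩, (hmodmem D _).mpr hDT⟩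
  -- nonempty X has consistent theory
  have hthcons : ∀ X : Set M, X.Nonempty → C (ThSet sat X) ≠ Set.univ := by
    rintro X ⟨m, hm⟩ h
    have hsub : ThSet sat X ⊆ m.val := fun a ha => ha m hm
    exact m.2.1 (hup _ _ hsub h)
  -- the choice function
  refine ⟨fun X => if ModSet sat (C (ThSet sat X)) ⊆ X
      then ModSet sat (C (ThSet sat X)) else X, ?_, ?_, ?_, ?_, ?_, ?_⟩
  · -- Contraction
    intro X
    dsimp only
    by_cases h : ModSet sat (C (ThSet sat X)) ⊆ X
    · rw [if_pos h]; exact h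
    · rw [if_neg h]
  · -- Local Cumulativity
    intro X Y hfY hYX
    dsimp only at hfY ⊢
    by_cases h : ModSet sat (C (ThSet sat X)) ⊆ X
    · rw [if_pos h] at hfY
      rcases X.eq_empty_or_nonempty with hXe | hXne
      · have : Y = X := Set.Subset.antisymm hYX (hXe ▸ Set.empty_subset _)
        rw [this]
      · have hWcons : C (ThSet sat X) ≠ Set.univ := hthcons X hXne
        have hthW : ThSet sat (ModSet sat (C (ThSet sat X))) = C (ThSet sat X) :=
          hthmod _ (hidem _) (by rwa [hidem])
        have hCY : C (ThSet sat Y) = C (ThSet sat X) := by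
          refine (hCum (ThSet sat X) (ThSet sat Y) ?_ ?_).symm
          · intro a ha m hm
            exact ha m (hYX hm)
          · intro a ha
            rw [← hthW]
            intro m hm
            exact ha m (hfY hm)
        rw [if_pos (hCY ▸ hfY), hCY, if_pos h]
    · rw [if_neg h] at hfY
      have : Y = X := Set.Subset.antisymm hYX hfY
      rw [this]
  · -- Consistency
    intro X hX
    dsimp only at hX
    by_cases h : ModSet sat (C (ThSet sat X)) ⊆ X
    · rw [if_pos h] at hX
      by_contra hXne
      have hne : X.Nonempty := Set.nonempty_iff_ne_empty.mpr hXne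
      have := hmodne (C (ThSet sat X)) (by rw [hidem]; exact hthcons X hne)
      rw [hX] at this
      exact Set.not_nonempty_empty this
    · rwa [if_neg h] at hX
  · -- conjunction
    intro m a b
    exact hMCconj m.val m.2 a b
  · -- negation
    intro m a
    exact hMCneg m.val m.2 a
  · -- representation
    intro A
    dsimp only
    have hW : C (ThSet sat (ModSet sat A)) = C A := hthmodC A
    have hcond : ModSet sat (C (ThSet sat (ModSet sat A))) ⊆ ModSet sat A := by
      rw [hW]
      intro m hm
      rw [hmodmem] at hm ⊢
      exact (hIncl A).trans hm
    rw [if_pos hcond, hW]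
    by_cases hA : C A = Set.univ
    · have hmode : ModSet sat (C A) = ∅ := by
        rw [Set.eq_empty_iff_forall_notMem]
        intro m hm
        rw [hmodmem, hA] at hm
        have huniv : m.val = Set.univ := Set.eq_univ_of_univ_subset hm
        apply m.2.1
        rw [huniv]
        exact Set.eq_univ_of_univ_subset (hIncl _)
      rw [hmode, hA]
      exact (Set.eq_univ_iff_forall.mpr (fun a m hm => absurd hm (Set.notMem_empty m))).symm
    · exact (hthmod (C A) (hidem A) (by rwa [hidem])).symm
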